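/- Let G be a finite simple graph and let u, v be adjacent vertices of G with deg_G(u) = deg_G(v) = 3. If G − {u, v} is (2,1)-decomposable, then G is (2,1)-decomposable. -/

import Mathlib

/-- A graph `G` is `d`-degenerate if every nonempty (induced) subgraph has a
vertex of degree at most `d`. -/
def SimpleGraph.DegenerateLE {V : Type*} (G : SimpleGraph V) (d : ℕ) : Prop :=
  ∀ S : Set V, S.Nonempty → ∃ v ∈ S, (S ∩ G.neighborSet v).ncard ≤ d

/-- A graph `G` is `(d, h)`-decomposable if there is a subgraph `H` of `G` with
maximum degree at most `h` such that `G - E(H)` is `d`-degenerate. -/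
def SimpleGraph.IsDecomposable {V : Type*} (G : SimpleGraph V) (d h : ℕ) : Prop :=
  ∃ H : SimpleGraph V, H ≤ G ∧ (∀ v, (H.neighborSet v).ncard ≤ h) ∧
    (G \ H).DegenerateLE d

/-- If `u` and `v` are adjacent `3`-vertices and `G - {u, v}` is
`(2,1)`-decomposable, then `G` is `(2,1)`-decomposable. -/
theorem statement2 {V : Type*} [Fintype V] (G : SimpleGraph V) (u v : V)
    (hadj : G.Adj u v)
    (hu : (G.neighborSet u).ncard = 3) (hv : (G.neighborSet v).ncard = 3)
    (h : (G.induce (({u, v} : Set V)ᶜ)).IsDecomposable 2 1) :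
    G.IsDecomposable 2 1 := by
  classical
  set C : Set V := ({u, v} : Set V)ᶜ with hC
  obtain ⟨H', hle', hdeg', hdegen'⟩ := h
  have hne : u ≠ v := G.ne_of_adj hadj
  have huC : u ∉ C := by simp [hC]
  have hvC : v ∉ C := by simp [hC]
  let f : ↥C ↪ V := ⟨Subtype.val, Subtype.val_injective⟩
  set H : SimpleGraph V := (H'.map f) ⊔ SimpleGraph.fromEdgeSet {s(u, v)} with hH
  have hHadj : ∀ a b : V, H.Adj a b ↔
      (∃ p q, H'.Adj p q ∧ (p : V) = a ∧ (q : V) = b) ∨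
        ((a = u ∧ b = v) ∨ (a = v ∧ b = u)) := by
    intro a b
    constructor
    · rintro (⟨-, p, q, hpq, rfl, rfl⟩ | he)
      · exact Or.inl ⟨p, q, hpq, rfl, rfl⟩
      · rw [SimpleGraph.fromEdgeSet_adj] at he
        obtain ⟨he, -⟩ := he
        simp only [Set.mem_singleton_iff, Sym2.eq, Sym2.rel_iff', Prod.mk.injEq,
          Prod.swap_prod_mk] at he
        exact Or.inr he
    · rintro (⟨p, q, hpq, rfl, rfl⟩ | (⟨rfl, rfl⟩ | ⟨rfl, rfl⟩))
      · exact Or.inl ⟨fun hh => H'.ne_of_adj hpq (Subtype.ext hh), p, q, hpq, rfl, rfl⟩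
      · exact Or.inr (by rw [SimpleGraph.fromEdgeSet_adj]; exact ⟨rfl, hne⟩)
      · exact Or.inr (by rw [SimpleGraph.fromEdgeSet_adj]; exact ⟨Sym2.eq_swap, hne.symm⟩)
  -- H ≤ G
  have hHle : H ≤ G := by
    intro a b hab
    rcases (hHadj a b).mp hab with ⟨p, q, hpq, rfl, rfl⟩ | (⟨rfl, rfl⟩ | ⟨rfl, rfl⟩)
    · exact hle' hpq
    · exact hadj
    · exact hadj.symm
  -- neighbor sets of u, v in H
  have hNu : H.neighborSet u = {v} := by
    ext x
    rw [SimpleGraph.mem_neighborSet, Set.mem_singleton_iff]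
    constructor
    · intro hx
      rcases (hHadj u x).mp hx with ⟨p, q, hpq, hp, hq⟩ | (⟨-, rfl⟩ | ⟨h1, -⟩)
      · exact absurd (hp ▸ p.2) huC
      · rfl
      · exact absurd h1 hne
    · rintro rfl
      exact (hHadj u _).mpr (Or.inr (Or.inl ⟨rfl, rfl⟩))
  have hNv : H.neighborSet v = {u} := by
    ext x
    rw [SimpleGraph.mem_neighborSet, Set.mem_singleton_iff]
    constructor
    · intro hx
      rcases (hHadj v x).mp hx with ⟨p, q, hpq, hp, hq⟩ | (⟨h1, -⟩ | ⟨-, rfl⟩)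
      · exact absurd (hp ▸ p.2) hvC
      · exact absurd h1 hne.symm
      · rfl
    · rintro rfl
      exact (hHadj v _).mpr (Or.inr (Or.inr ⟨rfl, rfl⟩))
  -- neighbor sets of other vertices in H
  have hNo : ∀ (a : V) (ha : a ∈ C),
      H.neighborSet a = Subtype.val '' (H'.neighborSet ⟨a, ha⟩) := by
    intro a ha
    ext x
    rw [SimpleGraph.mem_neighborSet, Set.mem_image]
    constructor
    · intro hx
      rcases (hHadj a x).mp hx with ⟨p, q, hpq, hp, hq⟩ | (⟨rfl, -⟩ | ⟨rfl, -⟩)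
      · have hpa : p = ⟨a, ha⟩ := Subtype.ext hp
        exact ⟨q, hpa ▸ hpq, hq⟩
      · exact absurd ha huC
      · exact absurd ha hvC
    · rintro ⟨q, hq, rfl⟩
      exact (hHadj a _).mpr (Or.inl ⟨⟨a, ha⟩, q, hq, rfl, rfl⟩)
  refine ⟨H, hHle, ?_, ?_⟩
  · intro a
    by_cases ha : a ∈ C
    · rw [hNo a ha, Set.ncard_image_of_injective _ Subtype.val_injective]
      exact hdeg' _
    · have : a = u ∨ a = v := by
        by_contra hcon
        push_neg at hcon
        exact ha (by simp [hC, hcon.1, hcon.2])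
      rcases this with rfl | rfl
      · simp [hNu]
      · simp [hNv]
  · -- degeneracy
    have hGu : (G \ H).neighborSet u = G.neighborSet u \ {v} := by
      ext x
      simp only [SimpleGraph.mem_neighborSet, SimpleGraph.sdiff_adj, Set.mem_diff,
        Set.mem_singleton_iff]
      constructor
      · rintro ⟨h1, h2⟩
        refine ⟨h1, fun hx => h2 ?_⟩
        subst hx
        have : x ∈ H.neighborSet u := by rw [hNu]; rfl
        exact this
      · rintro ⟨h1, h2⟩
        refine ⟨h1, fun hx => h2 ?_⟩
        have : x ∈ H.neighborSet u := hx
        rw [hNu] at this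
        exact this
    have hGv : (G \ H).neighborSet v = G.neighborSet v \ {u} := by
      ext x
      simp only [SimpleGraph.mem_neighborSet, SimpleGraph.sdiff_adj, Set.mem_diff,
        Set.mem_singleton_iff]
      constructor
      · rintro ⟨h1, h2⟩
        refine ⟨h1, fun hx => h2 ?_⟩
        subst hx
        have : x ∈ H.neighborSet v := by rw [hNv]; rfl
        exact this
      · rintro ⟨h1, h2⟩
        refine ⟨h1, fun hx => h2 ?_⟩
        have : x ∈ H.neighborSet v := hx
        rw [hNv] at this
        exact this
    have hmemu : v ∈ G.neighborSet u := hadj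
    have hmemv : u ∈ G.neighborSet v := hadj.symm
    have hcu : ((G \ H).neighborSet u).ncard = 2 := by
      rw [hGu, Set.ncard_diff_singleton_of_mem hmemu, hu]
    have hcv : ((G \ H).neighborSet v).ncard = 2 := by
      rw [hGv, Set.ncard_diff_singleton_of_mem hmemv, hv]
    intro S hS
    by_cases hus : u ∈ S
    · refine ⟨u, hus, ?_⟩
      calc (S ∩ (G \ H).neighborSet u).ncard
          ≤ ((G \ H).neighborSet u).ncard :=
            Set.ncard_le_ncard Set.inter_subset_right (Set.toFinite _)
        _ = 2 := hcu
    by_cases hvs : v ∈ S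
    · refine ⟨v, hvs, ?_⟩
      calc (S ∩ (G \ H).neighborSet v).ncard
          ≤ ((G \ H).neighborSet v).ncard :=
            Set.ncard_le_ncard Set.inter_subset_right (Set.toFinite _)
        _ = 2 := hcv
    -- S avoids u and v
    have hSC : S ⊆ C := by
      intro x hx
      simp only [hC, Set.mem_compl_iff, Set.mem_insert_iff, Set.mem_singleton_iff]
      rintro (rfl | rfl)
      exacts [hus hx, hvs hx]
    set S' : Set ↥C := Subtype.val ⁻¹' S with hS'
    obtain ⟨w, hw⟩ := hS
    have hS'ne : S'.Nonempty := ⟨⟨w, hSC hw⟩, hw⟩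
    obtain ⟨w', hw'S, hcard⟩ := hdegen' S' hS'ne
    refine ⟨(w' : V), hw'S, ?_⟩
    have hsub : S ∩ (G \ H).neighborSet (w' : V) ⊆
        Subtype.val '' (S' ∩ (G.induce C \ H').neighborSet w') := by
      rintro x ⟨hxS, hxN⟩
      have hxC : x ∈ C := hSC hxS
      refine ⟨⟨x, hxC⟩, ⟨hxS, ?_⟩, rfl⟩
      simp only [SimpleGraph.mem_neighborSet, SimpleGraph.sdiff_adj] at hxN ⊢
      obtain ⟨hGx, hHx⟩ := hxN
      refine ⟨hGx, fun hadj' => hHx ?_⟩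
      exact (hHadj _ _).mpr (Or.inl ⟨w', ⟨x, hxC⟩, hadj', rfl, rfl⟩)
    calc (S ∩ (G \ H).neighborSet (w' : V)).ncard
        ≤ (Subtype.val '' (S' ∩ (G.induce C \ H').neighborSet w')).ncard :=
          Set.ncard_le_ncard hsub (Set.toFinite _)
      _ = (S' ∩ (G.induce C \ H').neighborSet w').ncard :=
          Set.ncard_image_of_injective _ Subtype.val_injective
      _ ≤ 2 := hcard
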